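/- Contraction identity relating the q-antisymmetrizer in top and lower degrees: W^{i_1...i_{k−1} m}_{j_1...j_{k−1} m} (summed over m) = (N−k+1) · W^{i_1...i_{k−1}}_{j_1...j_{k−1}}, where W is the q-antisymmetrizer on (ℂ^N)^{⊗k} built from Λ^{ab}_{cd}=q(a,b)δ^a_dδ^b_c. -/

import Mathlib

/-- `Λ` acting at positions `t, t+1` of `(ℂ^N)^{⊗k}` (identity if `t+1 ≥ k`):
built from `Λ^{ab}_{cd} = q(a,b) δ^a_d δ^b_c`, it maps `e_g` to
`q(g t, g (t+1)) e_{g ∘ swap(t,t+1)}`. -/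
def lamPos {N : ℕ} (q : Fin N → Fin N → ℂ) (k t : ℕ) :
    Matrix (Fin k → Fin N) (Fin k → Fin N) ℂ :=
  if h : t + 1 < k then
    fun f g =>
      if g = f ∘ (Equiv.swap (⟨t, Nat.lt_of_succ_lt h⟩ : Fin k) ⟨t + 1, h⟩)
      then q (f ⟨t, Nat.lt_of_succ_lt h⟩) (f ⟨t + 1, h⟩) else 0
  else 1

/-- The operators `𝓘_{1...m}` of the q-antisymmetrizer recursion:
`𝓘_{1} = I`, `𝓘_{1...m} = I − 𝓘_{1...m−1} Λ_{m−1,m}`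
(in 0-based positions `Λ_{m−1,m} = lamPos q k (m−2)`), realized as matrices on
`(ℂ^N)^{⊗k}`. -/
noncomputable def Ical {N : ℕ} (q : Fin N → Fin N → ℂ) (k : ℕ) :
    ℕ → Matrix (Fin k → Fin N) (Fin k → Fin N) ℂ
  | 0 => 1
  | 1 => 1
  | (m + 2) => 1 - Ical q k (m + 1) * lamPos q k m

/-- The q-antisymmetrizer `W_{1...m}` defined by the recursion
`W_{1...m} = 𝓘_{1...m} W_{1...m−1}`, `W_1 = I`. -/
noncomputable def Wmat {N : ℕ} (q : Fin N → Fin N → ℂ) (k : ℕ) :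
    ℕ → Matrix (Fin k → Fin N) (Fin k → Fin N) ℂ
  | 0 => 1
  | (m + 1) => Ical q k (m + 1) * Wmat q k m

namespace WAux

set_option maxRecDepth 8000

variable {N : ℕ} (q : Fin N → Fin N → ℂ)

/-- complex-valued sign -/
def sgn {k : ℕ} (σ : Equiv.Perm (Fin k)) : ℂ := ((Equiv.Perm.sign σ : ℤ) : ℂ)

/-- the inversion-pairs coefficient -/
noncomputable def coefA {k : ℕ} (f : Fin k → Fin N) (σ : Equiv.Perm (Fin k)) : ℂ :=
  ∏ p ∈ Finset.univ.filter
      (fun p : Fin k × Fin k => p.1 < p.2 ∧ σ⁻¹ p.2 < σ⁻¹ p.1),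
    q (f p.1) (f p.2)

/-- the representing matrix of a permutation -/
noncomputable def Rmat {k : ℕ} (σ : Equiv.Perm (Fin k)) :
    Matrix (Fin k → Fin N) (Fin k → Fin N) ℂ :=
  fun f g => if g = f ∘ σ then coefA q f σ else 0

/-- adjacent transposition as a permutation (1 if out of range) -/
def sw (k t : ℕ) : Equiv.Perm (Fin k) :=
  if h : t + 1 < k then Equiv.swap ⟨t, Nat.lt_of_succ_lt h⟩ ⟨t+1, h⟩ else 1

lemma swap_pair_lt {k : ℕ} {a b : Fin k} (hab : (a:ℕ)+1 = (b:ℕ))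
    {p : Fin k × Fin k} (hp : p.1 < p.2) (hne : p ≠ (a, b)) :
    Equiv.swap a b p.1 < Equiv.swap a b p.2 := by
  have hne' : ¬ ((p.1:ℕ) = (a:ℕ) ∧ (p.2:ℕ) = (b:ℕ)) := by
    rintro ⟨x, y⟩
    exact hne (Prod.ext (Fin.ext x) (Fin.ext y))
  have hval : (p.1 : ℕ) < (p.2 : ℕ) := hp
  clear hne hp
  rw [Fin.lt_def]
  simp only [Equiv.swap_apply_def]
  split_ifs <;> (simp only [Fin.ext_iff] at *) <;> omega

lemma coefA_swap_mul {k : ℕ} (h2 : ∀ a b, q a b * q b a = 1)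
    {a b : Fin k} (hab : (a:ℕ)+1 = (b:ℕ)) (f : Fin k → Fin N) (σ : Equiv.Perm (Fin k)) :
    q (f a) (f b) * coefA q (f ∘ Equiv.swap a b) σ
      = coefA q f (Equiv.swap a b * σ) := by
  classical
  set s := Equiv.swap a b with hs
  have hsa : s a = b := Equiv.swap_apply_left a b
  have hsb : s b = a := Equiv.swap_apply_right a b
  have hab' : a ≠ b := fun h => by rw [h] at hab; omega
  have haltb : a < b := Fin.lt_def.mpr (by omega)
  have hinv : ∀ x, (s * σ)⁻¹ x = σ⁻¹ (s x) := by
    intro x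
    simp [hs, mul_inv_rev, Equiv.swap_inv, Equiv.Perm.mul_apply]
  set A := Finset.univ.filter
      (fun p : Fin k × Fin k => p.1 < p.2 ∧ σ⁻¹ p.2 < σ⁻¹ p.1) with hA
  set B := Finset.univ.filter
      (fun p : Fin k × Fin k => p.1 < p.2 ∧ σ⁻¹ (s p.2) < σ⁻¹ (s p.1)) with hB
  have hBdef : coefA q f (s * σ) = ∏ p ∈ B, q (f p.1) (f p.2) := by
    unfold coefA
    apply Finset.prod_congr _ (fun _ _ => rfl)
    ext p
    simp only [Finset.mem_filter, hinv, hB]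
  have hAdef : coefA q (f ∘ s) σ = ∏ p ∈ A, q (f (s p.1)) (f (s p.2)) := rfl
  have hswap_invol : ∀ x, s (s x) = x := fun x => Equiv.swap_apply_self a b x
  have hbij : ∏ p ∈ A.erase (a,b), q (f (s p.1)) (f (s p.2))
      = ∏ p ∈ B.erase (a,b), q (f p.1) (f p.2) := by
    apply Finset.prod_nbij' (fun p => (s p.1, s p.2)) (fun p => (s p.1, s p.2))
    · intro p hp
      rw [Finset.mem_erase] at hp ⊢
      obtain ⟨hpe, hpA⟩ := hp
      rw [hA, Finset.mem_filter] at hpA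
      obtain ⟨-, hlt, hinvlt⟩ := hpA
      refine ⟨?_, ?_⟩
      · intro h
        have e1 : s p.1 = a := congrArg Prod.fst h
        have e2 : s p.2 = b := congrArg Prod.snd h
        have f1 : p.1 = b := by rw [← hsa, ← e1, hswap_invol]
        have f2 : p.2 = a := by rw [← hsb, ← e2, hswap_invol]
        rw [f1, f2] at hlt
        exact absurd haltb (lt_asymm hlt)
      · rw [hB, Finset.mem_filter]
        exact ⟨Finset.mem_univ _, swap_pair_lt hab hlt hpe,
          by simpa [hswap_invol] using hinvlt⟩
    · intro p hp
      rw [Finset.mem_erase] at hp ⊢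
      obtain ⟨hpe, hpB⟩ := hp
      rw [hB, Finset.mem_filter] at hpB
      obtain ⟨-, hlt, hinvlt⟩ := hpB
      refine ⟨?_, ?_⟩
      · intro h
        have e1 : s p.1 = a := congrArg Prod.fst h
        have e2 : s p.2 = b := congrArg Prod.snd h
        have f1 : p.1 = b := by rw [← hsa, ← e1, hswap_invol]
        have f2 : p.2 = a := by rw [← hsb, ← e2, hswap_invol]
        rw [f1, f2] at hlt
        exact absurd haltb (lt_asymm hlt)
      · rw [hA, Finset.mem_filter]
        exact ⟨Finset.mem_univ _, swap_pair_lt hab hlt hpe, hinvlt⟩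
    · intro p _; simp [hswap_invol]
    · intro p _; simp [hswap_invol]
    · intro p _; rfl
  rw [hBdef, hAdef]
  rcases lt_trichotomy (σ⁻¹ a) (σ⁻¹ b) with hlt | heq | hgt
  · have hAe : (a, b) ∉ A := by
      rw [hA, Finset.mem_filter]
      rintro ⟨-, -, h⟩
      exact lt_asymm hlt h
    have hBe : (a, b) ∈ B := by
      rw [hB, Finset.mem_filter]
      refine ⟨Finset.mem_univ _, haltb, ?_⟩
      show σ⁻¹ (s b) < σ⁻¹ (s a)
      rw [hsa, hsb]; exact hlt
    rw [← Finset.mul_prod_erase B (fun p => q (f p.1) (f p.2)) hBe, ← hbij,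
      Finset.erase_eq_of_notMem hAe]
  · exact absurd (σ⁻¹.injective heq) hab'
  · have hAe : (a, b) ∈ A := by
      rw [hA, Finset.mem_filter]
      exact ⟨Finset.mem_univ _, haltb, hgt⟩
    have hBe : (a, b) ∉ B := by
      rw [hB, Finset.mem_filter]
      rintro ⟨-, -, h⟩
      rw [hsa, hsb] at h
      exact lt_asymm hgt h
    rw [Finset.erase_eq_of_notMem hBe] at hbij
    rw [← Finset.mul_prod_erase A (fun p => q (f (s p.1)) (f (s p.2))) hAe, hbij,
      ← mul_assoc]
    show q (f a) (f b) * q (f (s a)) (f (s b)) * _ = _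
    rw [hsa, hsb, h2 (f a) (f b), one_mul]



lemma Rmat_one {k : ℕ} : Rmat q (1 : Equiv.Perm (Fin k)) = 1 := by
  funext f g
  have hcoef : coefA q f (1 : Equiv.Perm (Fin k)) = 1 := by
    unfold coefA
    rw [Finset.prod_eq_one]
    intro p hp
    rw [Finset.mem_filter] at hp
    obtain ⟨-, h1, h2⟩ := hp
    simp only [inv_one, Equiv.Perm.one_apply] at h2
    exact absurd h1 (lt_asymm h2)
  simp only [Rmat, hcoef, Matrix.one_apply, Equiv.Perm.coe_one, Function.comp_id]
  by_cases h : f = g <;> simp [h, eq_comm]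

lemma lam_mul_Rmat {k : ℕ} (h2 : ∀ a b, q a b * q b a = 1) (t : ℕ)
    (σ : Equiv.Perm (Fin k)) :
    lamPos q k t * Rmat q σ = Rmat q (sw k t * σ) := by
  by_cases h : t + 1 < k
  · funext f g
    set a : Fin k := ⟨t, Nat.lt_of_succ_lt h⟩
    set b : Fin k := ⟨t+1, h⟩
    have hsw : sw k t = Equiv.swap a b := dif_pos h
    rw [Matrix.mul_apply]
    have hlam : lamPos q k t = fun f g =>
        if g = f ∘ (Equiv.swap a b) then q (f a) (f b) else 0 := dif_pos h
    rw [hlam]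
    rw [Finset.sum_eq_single (f ∘ (Equiv.swap a b))]
    · simp only [if_pos rfl]
      rw [Rmat, Rmat, hsw]
      have hcond : (g = (f ∘ ⇑(Equiv.swap a b)) ∘ ⇑σ)
          ↔ (g = f ∘ ⇑(Equiv.swap a b * σ)) := by
        rw [Equiv.Perm.coe_mul]
        rfl
      by_cases hg : g = f ∘ ⇑(Equiv.swap a b * σ)
      · rw [if_pos (hcond.mpr hg), if_pos hg]
        exact coefA_swap_mul q h2 rfl f σ
      · rw [if_neg (fun hh => hg (hcond.mp hh)), if_neg hg, mul_zero]
    · intro h' _ hne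
      dsimp only
      rw [if_neg hne, zero_mul]
    · intro habs
      exact absurd (Finset.mem_univ _) habs
  · have hsw : sw k t = 1 := dif_neg h
    have hlam : lamPos q k t = 1 := dif_neg h
    rw [hsw, hlam, one_mul, one_mul]

lemma Rmat_sw {k : ℕ} (t : ℕ) : Rmat q (sw k t) = lamPos q k t := by
  by_cases h : t + 1 < k
  · set a : Fin k := ⟨t, Nat.lt_of_succ_lt h⟩ with ha
    set b : Fin k := ⟨t+1, h⟩ with hb
    have hsw : sw k t = Equiv.swap a b := dif_pos h
    have hlam : lamPos q k t = fun f g =>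
        if g = f ∘ (Equiv.swap a b) then q (f a) (f b) else 0 := dif_pos h
    rw [hsw, hlam]
    funext f g
    have hfilter : Finset.univ.filter
        (fun p : Fin k × Fin k => p.1 < p.2 ∧
          (Equiv.swap a b)⁻¹ p.2 < (Equiv.swap a b)⁻¹ p.1) = {(a, b)} := by
      ext p
      rw [Finset.mem_filter, Finset.mem_singleton]
      constructor
      · rintro ⟨-, hlt, hinv⟩
        by_contra hne
        rw [Equiv.swap_inv] at hinv
        exact absurd (swap_pair_lt rfl hlt hne) (lt_asymm hinv)
      · rintro rfl
        refine ⟨Finset.mem_univ _, Fin.lt_def.mpr (by simp [ha, hb]), ?_⟩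
        rw [Equiv.swap_inv]
        show Equiv.swap a b b < Equiv.swap a b a
        rw [Equiv.swap_apply_left, Equiv.swap_apply_right]
        exact Fin.lt_def.mpr (by simp [ha, hb])
    have hcoef : coefA q f (Equiv.swap a b) = q (f a) (f b) := by
      unfold coefA
      rw [hfilter, Finset.prod_singleton]
    rw [Rmat, hcoef]
  · have hsw : sw k t = 1 := dif_neg h
    have hlam : lamPos q k t = 1 := dif_neg h
    rw [hsw, hlam, Rmat_one]

/-- coset representatives -/
def cperm (k : ℕ) : ℕ → ℕ → Equiv.Perm (Fin k)
  | _, 0 => 1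
  | 0, _+1 => 1
  | m+1, r+1 => cperm k (m) r * sw k m

lemma cperm_zero (k m : ℕ) : cperm k m 0 = 1 := by
  cases m <;> rfl

lemma Rmat_cperm_mul {k : ℕ} (h2 : ∀ a b, q a b * q b a = 1) :
    ∀ (r m : ℕ) (τ : Equiv.Perm (Fin k)),
      Rmat q (cperm k m r * τ) = Rmat q (cperm k m r) * Rmat q τ := by
  intro r
  induction r with
  | zero => intro m τ; rw [cperm_zero, one_mul, Rmat_one, one_mul]
  | succ r ih =>
    intro m τ
    cases m with
    | zero => show Rmat q ((1 : Equiv.Perm (Fin k)) * τ) = Rmat q 1 * _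
              rw [one_mul, Rmat_one, one_mul]
    | succ m =>
      have e1 : cperm k (m+1) (r+1) = cperm k m r * sw k m := rfl
      rw [e1, mul_assoc, ih m (sw k m * τ), ← lam_mul_Rmat q h2 m τ, ← Rmat_sw q m,
        ih m (sw k m), mul_assoc]

lemma IcalSum {k : ℕ} (h2 : ∀ a b, q a b * q b a = 1) :
    ∀ m : ℕ, Ical q k (m+1)
      = ∑ r ∈ Finset.range (m+1), ((-1:ℂ)^r) • Rmat q (cperm k m r) := by
  intro m
  induction m with
  | zero =>
    show Ical q k 1 = _
    rw [Finset.sum_range_one, cperm_zero, Rmat_one, pow_zero, one_smul]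
    rfl
  | succ m ih =>
    show Ical q k (m+2) = _
    rw [show Ical q k (m+2) = 1 - Ical q k (m+1) * lamPos q k m from rfl, ih]
    rw [Finset.sum_mul]
    rw [Finset.sum_range_succ' (fun r => ((-1:ℂ)^r) • Rmat q (cperm k (m+1) r)) (m+1)]
    have hterm : ∀ r ∈ Finset.range (m+1),
        ((-1:ℂ)^r • Rmat q (cperm k m r)) * lamPos q k m
        = -(((-1:ℂ)^(r+1)) • Rmat q (cperm k (m+1) (r+1))) := by
      intro r _
      rw [show cperm k (m+1) (r+1) = cperm k m r * sw k m from rfl,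
        Rmat_cperm_mul q h2, Rmat_sw q, smul_mul_assoc, pow_succ, mul_neg_one,
        neg_smul, neg_neg]
    rw [Finset.sum_congr rfl hterm, Finset.sum_neg_distrib, sub_neg_eq_add,
      cperm_zero, Rmat_one, pow_zero, one_smul, add_comm]


lemma sw_fix {k : ℕ} (m : ℕ) {x : Fin k} (hx : m + 1 < (x:ℕ)) : sw k m x = x := by
  unfold sw
  split_ifs with h
  · apply Equiv.swap_apply_of_ne_of_ne <;>
      (intro hc; rw [hc] at hx; simp at hx)
  · rfl

lemma cperm_fix {k : ℕ} : ∀ (r m : ℕ) {x : Fin k}, m < (x:ℕ) → cperm k m r x = x := by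
  intro r
  induction r with
  | zero => intro m x hx; rw [cperm_zero]; rfl
  | succ r ih =>
    intro m x hx
    cases m with
    | zero => rfl
    | succ m =>
      show (cperm k m r * sw k m) x = x
      rw [Equiv.Perm.mul_apply, sw_fix m hx, ih m (by omega)]

lemma cperm_apply_last {k : ℕ} :
    ∀ (r m : ℕ) (hr : r ≤ m) (hm : m < k),
      cperm k m r ⟨m, hm⟩ = ⟨m - r, by omega⟩ := by
  intro r
  induction r with
  | zero => intro m hr hm; rw [cperm_zero]; rfl
  | succ r ih =>
    intro m hr hm
    cases m with
    | zero => omega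
    | succ m =>
      show (cperm k m r * sw k m) _ = _
      rw [Equiv.Perm.mul_apply]
      have hswm : sw k m = Equiv.swap ⟨m, by omega⟩ ⟨m+1, hm⟩ := dif_pos hm
      have : sw k m ⟨m+1, hm⟩ = ⟨m, by omega⟩ := by
        rw [hswm]; exact Equiv.swap_apply_right _ _
      rw [this, ih m (by omega) (by omega)]
      simp only [Fin.mk.injEq]
      omega

lemma cperm_sign {k : ℕ} :
    ∀ (r m : ℕ), r ≤ m → m < k →
      Equiv.Perm.sign (cperm k m r) = (-1)^r := by
  intro r
  induction r with
  | zero => intro m _ _; rw [cperm_zero]; simp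
  | succ r ih =>
    intro m hr hm
    cases m with
    | zero => omega
    | succ m =>
      show Equiv.Perm.sign (cperm k m r * sw k m) = _
      have hswm : sw k m = Equiv.swap ⟨m, by omega⟩ ⟨m+1, hm⟩ := dif_pos hm
      rw [map_mul, ih m (by omega) (by omega), hswm, Equiv.Perm.sign_swap
        (by intro hc; simp [Fin.ext_iff] at hc), pow_succ]

/-- permutations supported on the first `m` positions -/
def lowSet (k m : ℕ) : Finset (Equiv.Perm (Fin k)) :=
  Finset.univ.filter (fun σ => ∀ x : Fin k, m ≤ (x:ℕ) → σ x = x)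

lemma lowSet_zero (k : ℕ) : lowSet k 0 = {1} := by
  ext σ
  simp only [lowSet, Finset.mem_filter, Finset.mem_univ, true_and,
    Finset.mem_singleton]
  constructor
  · intro h; exact Equiv.ext fun x => h x (Nat.zero_le _)
  · rintro rfl; intro x _; rfl

lemma lowSet_top (k : ℕ) : lowSet k k = Finset.univ := by
  ext σ
  simp only [lowSet, Finset.mem_filter, Finset.mem_univ, true_and, iff_true]
  intro x hx
  exact absurd x.isLt (by omega)

lemma Wsum {k : ℕ} (h2 : ∀ a b, q a b * q b a = 1) :
    ∀ m : ℕ, m ≤ k → Wmat q k m = ∑ σ ∈ lowSet k m, sgn σ • Rmat q σ := by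
  intro m
  induction m with
  | zero =>
    intro _
    rw [lowSet_zero, Finset.sum_singleton, Rmat_one]
    show (1 : Matrix _ _ ℂ) = sgn 1 • 1
    rw [sgn]
    simp
  | succ m ih =>
    intro hmk
    have hm : m < k := hmk
    show Ical q k (m+1) * Wmat q k m = _
    rw [ih (by omega), IcalSum q h2 m, Finset.sum_mul]
    have hterm : ∀ r ∈ Finset.range (m+1),
        ((-1:ℂ)^r • Rmat q (cperm k m r)) * (∑ σ ∈ lowSet k m, sgn σ • Rmat q σ)
        = ∑ σ ∈ lowSet k m, ((-1:ℂ)^r * sgn σ) • Rmat q (cperm k m r * σ) := by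
      intro r _
      rw [Finset.mul_sum]
      apply Finset.sum_congr rfl
      intro σ _
      rw [Rmat_cperm_mul q h2, smul_mul_assoc, mul_smul_comm, smul_smul]
    rw [Finset.sum_congr rfl hterm, ← Finset.sum_product']
    -- now the bijection
    apply Finset.sum_nbij'
      (i := fun p => cperm k m p.1 * p.2)
      (j := fun τ => (m - ((τ ⟨m, hm⟩ : Fin k):ℕ),
        (cperm k m (m - ((τ ⟨m, hm⟩ : Fin k):ℕ)))⁻¹ * τ))
    · rintro ⟨r, σ⟩ hp
      rw [Finset.mem_product] at hp
      obtain ⟨hr, hσ⟩ := hp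
      rw [Finset.mem_range] at hr
      simp only [lowSet, Finset.mem_filter, Finset.mem_univ, true_and] at hσ ⊢
      intro x hx
      rw [Equiv.Perm.mul_apply, hσ x (by omega), cperm_fix r m (by omega)]
    · intro τ hτ
      simp only [lowSet, Finset.mem_filter, Finset.mem_univ, true_and] at hτ
      have hvle : ((τ ⟨m, hm⟩ : Fin k):ℕ) ≤ m := by
        by_contra hc
        push_neg at hc
        have := hτ (τ ⟨m, hm⟩) (by omega)
        have h2' := τ.injective this
        rw [h2'] at hc
        simp at hc
      rw [Finset.mem_product, Finset.mem_range]
      constructor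
      · omega
      · simp only [lowSet, Finset.mem_filter, Finset.mem_univ, true_and]
        intro x hx
        rw [Equiv.Perm.mul_apply]
        rcases Nat.eq_or_lt_of_le hx with heq | hlt
        · have hxm : x = ⟨m, hm⟩ := Fin.ext heq.symm
          subst hxm
          have : cperm k m (m - ((τ ⟨m, hm⟩ : Fin k):ℕ)) ⟨m, hm⟩ = τ ⟨m, hm⟩ := by
            rw [cperm_apply_last _ m (by omega) hm]
            exact Fin.ext (by simp; omega)
          apply (cperm k m (m - ((τ ⟨m, hm⟩ : Fin k):ℕ))).injective
          rw [show ∀ (e : Equiv.Perm (Fin k)) y, e (e⁻¹ y) = y from fun e y => e.apply_symm_apply y, this]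
        · rw [hτ x (by omega)]
          have hfix : cperm k m (m - ((τ ⟨m, hm⟩ : Fin k):ℕ)) x = x :=
            cperm_fix _ m hlt
          apply (cperm k m (m - ((τ ⟨m, hm⟩ : Fin k):ℕ))).injective
          rw [show ∀ (e : Equiv.Perm (Fin k)) y, e (e⁻¹ y) = y from fun e y => e.apply_symm_apply y, hfix]
    · rintro ⟨r, σ⟩ hp
      rw [Finset.mem_product] at hp
      obtain ⟨hr, hσ⟩ := hp
      rw [Finset.mem_range] at hr
      simp only [lowSet, Finset.mem_filter, Finset.mem_univ, true_and] at hσ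
      have happ : (cperm k m r * σ) ⟨m, hm⟩ = ⟨m - r, by omega⟩ := by
        rw [Equiv.Perm.mul_apply, hσ ⟨m, hm⟩ (le_refl m),
          cperm_apply_last r m (by omega) hm]
      rw [happ]
      have hval : m - ((⟨m - r, by omega⟩ : Fin k) : ℕ) = r := by simp; omega
      rw [hval, ← mul_assoc, inv_mul_cancel, one_mul]
    · intro τ hτ
      rw [← mul_assoc, mul_inv_cancel, one_mul]
    · rintro ⟨r, σ⟩ hp
      rw [Finset.mem_product] at hp
      obtain ⟨hr, hσ⟩ := hp
      rw [Finset.mem_range] at hr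
      simp only [lowSet, Finset.mem_filter, Finset.mem_univ, true_and] at hσ
      have hsgn : sgn (cperm k m r * σ) = (-1:ℂ)^r * sgn σ := by
        unfold sgn
        rw [map_mul, cperm_sign r m (by omega) hm]
        push_cast
        ring
      rw [hsgn]

lemma lam_mul_W {k : ℕ} (h2 : ∀ a b, q a b * q b a = 1) (t : ℕ) (ht : t + 1 < k) :
    lamPos q k t * Wmat q k k = -Wmat q k k := by
  rw [Wsum q h2 k le_rfl, lowSet_top]
  rw [Matrix.mul_sum]
  have hsign : ∀ σ : Equiv.Perm (Fin k), sgn (sw k t * σ) = -sgn σ := by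
    intro σ
    unfold sgn
    have hsw : sw k t = Equiv.swap ⟨t, Nat.lt_of_succ_lt ht⟩ ⟨t+1, ht⟩ := dif_pos ht
    rw [map_mul, hsw, Equiv.Perm.sign_swap (by simp [Fin.ext_iff])]
    push_cast
    ring
  have hterm : ∀ σ ∈ Finset.univ, lamPos q k t * (sgn σ • Rmat q σ)
      = sgn σ • Rmat q (sw k t * σ) := by
    intro σ _
    rw [mul_smul_comm, lam_mul_Rmat q h2]
  rw [Finset.sum_congr rfl hterm, ← neg_one_smul ℂ (∑ σ : Equiv.Perm (Fin k), sgn σ • Rmat q σ),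
    Finset.smul_sum]
  apply Fintype.sum_equiv (Equiv.mulLeft (sw k t))
  intro σ
  have : sgn ((Equiv.mulLeft (sw k t)) σ) = -sgn σ := hsign σ
  rw [smul_smul]
  show sgn σ • Rmat q (sw k t * σ) = (-1 * sgn (sw k t * σ)) • Rmat q (sw k t * σ)
  rw [hsign σ]
  ring_nf

lemma Ical_mul_W {k : ℕ} (h2 : ∀ a b, q a b * q b a = 1) :
    ∀ m : ℕ, m + 1 ≤ k → Ical q k (m+1) * Wmat q k k = (((m:ℂ))+1) • Wmat q k k := by
  intro m
  induction m with
  | zero =>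
    intro _
    show (1 : Matrix _ _ ℂ) * _ = _
    rw [one_mul]
    norm_num
  | succ m ih =>
    intro hmk
    show (1 - Ical q k (m+1) * lamPos q k m) * Wmat q k k = _
    rw [sub_mul, one_mul, mul_assoc, lam_mul_W q h2 m (by omega), mul_neg,
      ih (by omega), sub_neg_eq_add]
    have : ((((m:ℕ)+1 : ℕ):ℂ)+1) • Wmat q k k
        = (1 : ℂ) • Wmat q k k + (((m:ℂ))+1) • Wmat q k k := by
      rw [← add_smul]
      push_cast
      ring_nf
    rw [this, one_smul]


/-- A matrix on `k+1` factors is the "restriction" (tensor with identity in the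
last factor) of a matrix on `k` factors. -/
def IsRes {k : ℕ} (A : Matrix (Fin (k+1) → Fin N) (Fin (k+1) → Fin N) ℂ)
    (B : Matrix (Fin k → Fin N) (Fin k → Fin N) ℂ) : Prop :=
  ∀ f g, A f g = if g (Fin.last k) = f (Fin.last k)
    then B (f ∘ Fin.castSucc) (g ∘ Fin.castSucc) else 0

lemma funsplit {k : ℕ} (f g : Fin (k+1) → Fin N) :
    f = g ↔ (f ∘ Fin.castSucc = g ∘ Fin.castSucc ∧ f (Fin.last k) = g (Fin.last k)) := by
  constructor
  · rintro rfl; exact ⟨rfl, rfl⟩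
  · rintro ⟨h1, h2⟩
    funext x
    cases x using Fin.lastCases with
    | last => exact h2
    | cast i => exact congrFun h1 i

lemma isRes_one {k : ℕ} : IsRes (N := N) (k := k) 1 1 := by
  intro f g
  rw [Matrix.one_apply]
  by_cases h : f = g
  · subst h
    rw [if_pos rfl, if_pos rfl, Matrix.one_apply_eq]
  · rw [if_neg h]
    by_cases h2 : g (Fin.last k) = f (Fin.last k)
    · rw [if_pos h2, Matrix.one_apply, if_neg]
      intro hc
      exact h ((funsplit f g).mpr ⟨hc, h2.symm⟩)
    · rw [if_neg h2]

lemma isRes_lam {k : ℕ} (t : ℕ) (ht : t + 1 < k) :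
    IsRes (lamPos q (k+1) t) (lamPos q k t) := by
  intro f g
  have ht' : t + 1 < k + 1 := by omega
  set a : Fin k := ⟨t, Nat.lt_of_succ_lt ht⟩ with ha
  set b : Fin k := ⟨t+1, ht⟩ with hb
  set a' : Fin (k+1) := ⟨t, Nat.lt_of_succ_lt ht'⟩ with ha'
  set b' : Fin (k+1) := ⟨t+1, ht'⟩ with hb'
  have hca : Fin.castSucc a = a' := Fin.ext rfl
  have hcb : Fin.castSucc b = b' := Fin.ext rfl
  have hsc : ∀ x : Fin k, Equiv.swap a' b' (Fin.castSucc x)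
      = Fin.castSucc (Equiv.swap a b x) := by
    intro x
    rcases eq_or_ne x a with rfl | hxa
    · rw [hca, Equiv.swap_apply_left, Equiv.swap_apply_left, hcb]
    · rcases eq_or_ne x b with rfl | hxb
      · rw [hcb, Equiv.swap_apply_right, Equiv.swap_apply_right, hca]
      · rw [Equiv.swap_apply_of_ne_of_ne (fun hc => hxa (by
            rw [← hca] at hc; exact Fin.castSucc_injective _ hc))
          (fun hc => hxb (by rw [← hcb] at hc; exact Fin.castSucc_injective _ hc)),
          Equiv.swap_apply_of_ne_of_ne hxa hxb]
  have hlast : Equiv.swap a' b' (Fin.last k) = Fin.last k := by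
    apply Equiv.swap_apply_of_ne_of_ne <;> (simp [ha', hb', Fin.ext_iff]; omega)
  have hlam1 : lamPos q (k+1) t = fun f g =>
      if g = f ∘ (Equiv.swap a' b') then q (f a') (f b') else 0 := dif_pos ht'
  have hlam2 : lamPos q k t = fun f g =>
      if g = f ∘ (Equiv.swap a b) then q (f a) (f b) else 0 := dif_pos ht
  rw [hlam1, hlam2]
  dsimp only
  have hiff : (g = f ∘ (Equiv.swap a' b')) ↔
      ((g ∘ Fin.castSucc = (f ∘ Fin.castSucc) ∘ (Equiv.swap a b))
        ∧ g (Fin.last k) = f (Fin.last k)) := by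
    rw [funsplit g (f ∘ (Equiv.swap a' b'))]
    constructor
    · rintro ⟨hc1, hc2⟩
      constructor
      · funext x
        rw [show (g ∘ Fin.castSucc) x = ((f ∘ ⇑(Equiv.swap a' b')) ∘ Fin.castSucc) x
            from congrFun hc1 x]
        show f (Equiv.swap a' b' (Fin.castSucc x)) = f (Fin.castSucc (Equiv.swap a b x))
        rw [hsc x]
      · rw [hc2]
        show f (Equiv.swap a' b' (Fin.last k)) = f (Fin.last k)
        rw [hlast]
    · rintro ⟨hc1, hc2⟩
      constructor
      · funext x
        rw [show (g ∘ Fin.castSucc) x = ((f ∘ Fin.castSucc) ∘ ⇑(Equiv.swap a b)) x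
            from congrFun hc1 x]
        show f (Fin.castSucc (Equiv.swap a b x)) = f (Equiv.swap a' b' (Fin.castSucc x))
        rw [hsc x]
      · rw [hc2]
        show f (Fin.last k) = f (Equiv.swap a' b' (Fin.last k))
        rw [hlast]
  by_cases hc2 : g (Fin.last k) = f (Fin.last k)
  · rw [if_pos hc2]
    by_cases hc1 : g ∘ Fin.castSucc = (f ∘ Fin.castSucc) ∘ (Equiv.swap a b)
    · rw [if_pos (hiff.mpr ⟨hc1, hc2⟩), if_pos hc1]
      simp only [Function.comp_apply, hca, hcb]
    · rw [if_neg (fun h => hc1 (hiff.mp h).1), if_neg hc1]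
  · rw [if_neg hc2, if_neg (fun h => hc2 (hiff.mp h).2)]

lemma sum_snoc_decomp {k : ℕ} (F : (Fin (k+1) → Fin N) → ℂ) :
    ∑ h : Fin (k+1) → Fin N, F h
      = ∑ c : Fin N, ∑ h0 : Fin k → Fin N, F (Fin.snoc h0 c) := by
  rw [← Equiv.sum_comp (Fin.snocEquiv (fun _ => Fin N)) F, Fintype.sum_prod_type]
  exact Finset.sum_congr rfl fun c _ => Finset.sum_congr rfl fun h0 _ => rfl

lemma isRes_mul {k : ℕ} {A B : Matrix (Fin (k+1) → Fin N) (Fin (k+1) → Fin N) ℂ}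
    {A' B' : Matrix (Fin k → Fin N) (Fin k → Fin N) ℂ}
    (hA : IsRes A A') (hB : IsRes B B') : IsRes (A * B) (A' * B') := by
  intro f g
  rw [Matrix.mul_apply, sum_snoc_decomp (fun h => A f h * B h g)]
  have hterm : ∀ c : Fin N, ∀ h0 : Fin k → Fin N,
      A f (Fin.snoc h0 c) * B (Fin.snoc h0 c) g
      = if g (Fin.last k) = f (Fin.last k) then
          (if c = f (Fin.last k) then A' (f ∘ Fin.castSucc) h0 * B' h0 (g ∘ Fin.castSucc)
            else 0)
        else 0 := by
    intro c h0
    rw [hA f _, hB _ g]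
    have e1 : (Fin.snoc h0 c : Fin (k+1) → Fin N) (Fin.last k) = c := Fin.snoc_last _ _
    have e2 : (Fin.snoc h0 c : Fin (k+1) → Fin N) ∘ Fin.castSucc = h0 := by
      funext x; exact Fin.snoc_castSucc _ _ _
    rw [e1, e2]
    split_ifs <;> simp_all
  simp only [hterm]
  by_cases hc : g (Fin.last k) = f (Fin.last k)
  · simp only [if_pos hc]
    have step : ∀ c : Fin N, (∑ h0 : Fin k → Fin N,
        if c = f (Fin.last k) then A' (f ∘ Fin.castSucc) h0 * B' h0 (g ∘ Fin.castSucc)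
          else 0)
        = if c = f (Fin.last k) then (A' * B') (f ∘ Fin.castSucc) (g ∘ Fin.castSucc)
          else 0 := by
      intro c
      by_cases hcf : c = f (Fin.last k)
      · simp only [if_pos hcf, Matrix.mul_apply]
      · simp only [if_neg hcf, Finset.sum_const_zero]
    rw [Finset.sum_congr rfl (fun c _ => step c), Finset.sum_ite_eq' Finset.univ]
    rw [if_pos (Finset.mem_univ _)]
  · simp only [if_neg hc]
    simp


lemma isRes_sub {k : ℕ} {A B : Matrix (Fin (k+1) → Fin N) (Fin (k+1) → Fin N) ℂ}
    {A' B' : Matrix (Fin k → Fin N) (Fin k → Fin N) ℂ}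
    (hA : IsRes A A') (hB : IsRes B B') : IsRes (A - B) (A' - B') := by
  intro f g
  rw [Matrix.sub_apply, hA, hB, Matrix.sub_apply]
  split_ifs <;> simp

lemma isRes_Ical {k : ℕ} : ∀ m, m ≤ k → IsRes (Ical q (k+1) m) (Ical q k m)
  | 0, _ => isRes_one
  | 1, _ => isRes_one
  | (m+2), h => by
      have hh1 : IsRes (Ical q (k+1) (m+1)) (Ical q k (m+1)) :=
        isRes_Ical (m+1) (by omega)
      have hh2 : IsRes (lamPos q (k+1) m) (lamPos q k m) :=
        isRes_lam q m (by omega)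
      show IsRes (1 - Ical q (k+1) (m+1) * lamPos q (k+1) m)
        (1 - Ical q k (m+1) * lamPos q k m)
      exact isRes_sub isRes_one (isRes_mul hh1 hh2)

lemma isRes_W {k : ℕ} : ∀ m, m ≤ k → IsRes (Wmat q (k+1) m) (Wmat q k m) := by
  intro m
  induction m with
  | zero => intro _; exact isRes_one
  | succ m ih =>
    intro h
    show IsRes (Ical q (k+1) (m+1) * Wmat q (k+1) m) (Ical q k (m+1) * Wmat q k m)
    exact isRes_mul (isRes_Ical q (m+1) h) (ih (by omega))

lemma snoc_comp_castSucc {k : ℕ} (i : Fin k → Fin N) (m : Fin N) :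
    (Fin.snoc i m : Fin (k+1) → Fin N) ∘ Fin.castSucc = i :=
  funext fun x => Fin.snoc_castSucc _ _ _

lemma PT_res {k : ℕ} {B : Matrix (Fin (k+1) → Fin N) (Fin (k+1) → Fin N) ℂ}
    {B' : Matrix (Fin k → Fin N) (Fin k → Fin N) ℂ} (hB : IsRes B B')
    (i j : Fin k → Fin N) :
    ∑ m : Fin N, B (Fin.snoc i m) (Fin.snoc j m) = (N:ℂ) * B' i j := by
  have hterm : ∀ m : Fin N, B (Fin.snoc i m) (Fin.snoc j m) = B' i j := by
    intro m
    rw [hB, Fin.snoc_last, Fin.snoc_last, if_pos rfl, snoc_comp_castSucc,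
      snoc_comp_castSucc]
  rw [Finset.sum_congr rfl (fun m _ => hterm m), Finset.sum_const, Finset.card_univ,
    Fintype.card_fin, nsmul_eq_mul]

lemma PT_mul_left {k : ℕ} {A : Matrix (Fin (k+1) → Fin N) (Fin (k+1) → Fin N) ℂ}
    {A' : Matrix (Fin k → Fin N) (Fin k → Fin N) ℂ} (hA : IsRes A A')
    (C : Matrix (Fin (k+1) → Fin N) (Fin (k+1) → Fin N) ℂ) (i j : Fin k → Fin N) :
    ∑ m : Fin N, (A * C) (Fin.snoc i m) (Fin.snoc j m)
      = ∑ h0 : Fin k → Fin N, A' i h0 * ∑ m : Fin N, C (Fin.snoc h0 m) (Fin.snoc j m) := by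
  have expand : ∀ m : Fin N, (A * C) (Fin.snoc i m) (Fin.snoc j m)
      = ∑ h0 : Fin k → Fin N, A' i h0 * C (Fin.snoc h0 m) (Fin.snoc j m) := by
    intro m
    rw [Matrix.mul_apply, sum_snoc_decomp (fun h => A (Fin.snoc i m) h * C h (Fin.snoc j m))]
    have hterm : ∀ c : Fin N, ∀ h0 : Fin k → Fin N,
        A (Fin.snoc i m) (Fin.snoc h0 c) * C (Fin.snoc h0 c) (Fin.snoc j m)
        = if c = m then A' i h0 * C (Fin.snoc h0 c) (Fin.snoc j m) else 0 := by
      intro c h0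
      rw [hA, Fin.snoc_last, Fin.snoc_last, snoc_comp_castSucc, snoc_comp_castSucc]
      split_ifs <;> simp_all
    simp only [hterm]
    rw [Finset.sum_comm]
    apply Finset.sum_congr rfl
    intro h0 _
    rw [Finset.sum_ite_eq' Finset.univ m
      (fun c => A' i h0 * C (Fin.snoc h0 c) (Fin.snoc j m)), if_pos (Finset.mem_univ _)]
  rw [Finset.sum_congr rfl (fun m _ => expand m), Finset.sum_comm]
  apply Finset.sum_congr rfl
  intro h0 _
  rw [Finset.mul_sum]

lemma PT_lam (h1 : ∀ a, q a a = 1) {t : ℕ}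
    {B : Matrix (Fin (t+2) → Fin N) (Fin (t+2) → Fin N) ℂ}
    {B' : Matrix (Fin (t+1) → Fin N) (Fin (t+1) → Fin N) ℂ} (hB : IsRes B B')
    (i j : Fin (t+1) → Fin N) :
    ∑ m : Fin N, (lamPos q (t+2) t * B) (Fin.snoc i m) (Fin.snoc j m) = B' i j := by
  have ht' : t + 1 < t + 2 := by omega
  set a' : Fin (t+2) := ⟨t, Nat.lt_of_succ_lt ht'⟩ with ha'
  set b' : Fin (t+2) := ⟨t+1, ht'⟩ with hb'
  have hlam : lamPos q (t+2) t = fun f g =>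
      if g = f ∘ (Equiv.swap a' b') then q (f a') (f b') else 0 := dif_pos ht'
  have hab' : a' = Fin.castSucc (Fin.last t) := Fin.ext rfl
  have hbl : b' = Fin.last (t+1) := Fin.ext rfl
  set w := i (Fin.last t) with hw
  have collapse : ∀ m : Fin N, (lamPos q (t+2) t * B) (Fin.snoc i m) (Fin.snoc j m)
      = q w m * B ((Fin.snoc i m : Fin (t+2) → Fin N) ∘ (Equiv.swap a' b')) (Fin.snoc j m) := by
    intro m
    rw [Matrix.mul_apply, hlam]
    rw [Finset.sum_eq_single ((Fin.snoc i m : Fin (t+2) → Fin N) ∘ (Equiv.swap a' b'))]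
    · dsimp only
      rw [if_pos rfl]
      have e1 : (Fin.snoc i m : Fin (t+2) → Fin N) a' = w := by
        rw [hab']; exact Fin.snoc_castSucc _ _ _
      have e2 : (Fin.snoc i m : Fin (t+2) → Fin N) b' = m := by
        rw [hbl]; exact Fin.snoc_last _ _
      rw [e1, e2]
    · intro h' _ hne
      dsimp only
      rw [if_neg hne, zero_mul]
    · intro habs
      exact absurd (Finset.mem_univ _) habs
  have hBapp : ∀ m : Fin N,
      B ((Fin.snoc i m : Fin (t+2) → Fin N) ∘ (Equiv.swap a' b')) (Fin.snoc j m)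
      = if m = w then B' (((Fin.snoc i m : Fin (t+2) → Fin N) ∘ (Equiv.swap a' b')) ∘ Fin.castSucc) j else 0 := by
    intro m
    rw [hB]
    have e3 : ((Fin.snoc i m : Fin (t+2) → Fin N) ∘ (Equiv.swap a' b')) (Fin.last (t+1)) = w := by
      show (Fin.snoc i m : Fin (t+2) → Fin N) (Equiv.swap a' b' (Fin.last (t+1))) = w
      rw [← hbl, Equiv.swap_apply_right]
      show (Fin.snoc i m : Fin (t+2) → Fin N) a' = w
      rw [hab']; exact Fin.snoc_castSucc _ _ _
    rw [e3, Fin.snoc_last, snoc_comp_castSucc]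
  have hcast : ∀ m : Fin N, m = w →
      (((Fin.snoc i m : Fin (t+2) → Fin N) ∘ (Equiv.swap a' b')) ∘ Fin.castSucc) = i := by
    intro m hm
    funext x
    cases x using Fin.lastCases with
    | last =>
      show (Fin.snoc i m : Fin (t+2) → Fin N) (Equiv.swap a' b' (Fin.castSucc (Fin.last t))) = i (Fin.last t)
      rw [← hab', Equiv.swap_apply_left, hbl, Fin.snoc_last]
      rw [hm, hw]
    | cast x =>
      show (Fin.snoc i m : Fin (t+2) → Fin N) (Equiv.swap a' b' (Fin.castSucc (Fin.castSucc x))) = i (Fin.castSucc x)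
      rw [Equiv.swap_apply_of_ne_of_ne
        (by simp [ha', Fin.ext_iff]; omega) (by simp [hb', Fin.ext_iff]; omega)]
      exact Fin.snoc_castSucc _ _ _
  rw [Finset.sum_congr rfl (fun m _ => by rw [collapse m, hBapp m])]
  rw [Finset.sum_eq_single w]
  · rw [if_pos rfl, hcast w rfl, h1 w, one_mul]
  · intro c _ hne
    rw [if_neg hne, mul_zero]
  · intro habs
    exact absurd (Finset.mem_univ _) habs

end WAux

open WAux

/-- contraction identity for the q-antisymmetrizer:
`Σ_m W^{i_1...i_k m}_{j_1...j_k m} = (N−(k+1)+1) · W^{i_1...i_k}_{j_1...j_k}`,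
i.e. contracting the last upper and lower index of the antisymmetrizer on
`k+1` factors yields `(N−k)` times the antisymmetrizer on `k` factors. -/
theorem Wmat_contraction {N : ℕ} (q : Fin N → Fin N → ℂ)
    (h1 : ∀ a, q a a = 1)
    (h2 : ∀ a b, q a b * q b a = 1) :
    ∀ (k : ℕ) (i j : Fin k → Fin N),
      ∑ m : Fin N, Wmat q (k + 1) (k + 1) (Fin.snoc i m) (Fin.snoc j m)
        = ((N : ℂ) - (k : ℂ)) * Wmat q k k i j := by
  intro k
  cases k with
  | zero =>
    intro i j
    have hij : i = j := funext fun x => x.elim0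
    subst hij
    have hW1 : Wmat q 1 1 = 1 := by
      show Ical q 1 1 * Wmat q 1 0 = 1
      show (1 : Matrix (Fin 1 → Fin N) (Fin 1 → Fin N) ℂ) * 1 = 1
      rw [one_mul]
    have hW0 : Wmat q 0 0 i i = 1 := Matrix.one_apply_eq i
    rw [hW1, hW0]
    have hterm : ∀ m : Fin N, (1 : Matrix (Fin 1 → Fin N) (Fin 1 → Fin N) ℂ)
        (Fin.snoc i m) (Fin.snoc i m) = 1 := fun m => Matrix.one_apply_eq _
    rw [Finset.sum_congr rfl (fun m _ => hterm m), Finset.sum_const,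
      Finset.card_univ, Fintype.card_fin, nsmul_eq_mul]
    push_cast
    ring
  | succ n =>
    intro i j
    have hWtop : Wmat q (n+2) (n+2)
        = Wmat q (n+2) (n+1)
          - Ical q (n+2) (n+1) * (lamPos q (n+2) n * Wmat q (n+2) (n+1)) := by
      show Ical q (n+2) (n+2) * Wmat q (n+2) (n+1) = _
      rw [show Ical q (n+2) (n+2)
          = 1 - Ical q (n+2) (n+1) * lamPos q (n+2) n from rfl]
      rw [sub_mul, one_mul, mul_assoc]
    have hresW : IsRes (Wmat q (n+2) (n+1)) (Wmat q (n+1) (n+1)) :=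
      isRes_W q (n+1) le_rfl
    have hresI : IsRes (Ical q (n+2) (n+1)) (Ical q (n+1) (n+1)) :=
      isRes_Ical q (n+1) le_rfl
    rw [hWtop]
    have hsplit : ∀ m : Fin N,
        (Wmat q (n+2) (n+1)
          - Ical q (n+2) (n+1) * (lamPos q (n+2) n * Wmat q (n+2) (n+1)))
          (Fin.snoc i m) (Fin.snoc j m)
        = Wmat q (n+2) (n+1) (Fin.snoc i m) (Fin.snoc j m)
          - (Ical q (n+2) (n+1) * (lamPos q (n+2) n * Wmat q (n+2) (n+1)))
            (Fin.snoc i m) (Fin.snoc j m) := fun m => Matrix.sub_apply _ _ _ _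
    rw [Finset.sum_congr rfl (fun m _ => hsplit m), Finset.sum_sub_distrib]
    rw [PT_res hresW i j]
    rw [PT_mul_left hresI (lamPos q (n+2) n * Wmat q (n+2) (n+1)) i j]
    have hinner : ∀ h0 : Fin (n+1) → Fin N,
        ∑ m : Fin N, (lamPos q (n+2) n * Wmat q (n+2) (n+1))
          (Fin.snoc h0 m) (Fin.snoc j m) = Wmat q (n+1) (n+1) h0 j := by
      intro h0
      exact PT_lam q h1 hresW h0 j
    rw [Finset.sum_congr rfl (fun h0 _ => by rw [hinner h0])]
    have hIW : ∑ h0 : Fin (n+1) → Fin N,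
        Ical q (n+1) (n+1) i h0 * Wmat q (n+1) (n+1) h0 j
        = (((n:ℂ))+1) * Wmat q (n+1) (n+1) i j := by
      rw [← Matrix.mul_apply, Ical_mul_W q h2 n le_rfl, Matrix.smul_apply,
        smul_eq_mul]
    rw [hIW]
    push_cast
    ring
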